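/- If ρ(|A|) < 1 and the vector -(I - |A|)^{-1} b has at least one negative entry, then the absolute value equation Ax - |x| = b has no solution. -/

import Mathlib

open Matrix

/-- Componentwise absolute value of a vector. -/
noncomputable def absv {n : ℕ} (x : Fin n → ℝ) : Fin n → ℝ := fun i => |x i|

/-- Euclidean norm of a vector. -/
noncomputable def enorm {n : ℕ} (x : Fin n → ℝ) : ℝ := Real.sqrt (∑ i, x i ^ 2)

/-- Largest singular value (spectral / operator 2-norm). -/
noncomputable def sigmaMax {n : ℕ} (A : Matrix (Fin n) (Fin n) ℝ) : ℝ :=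
  sSup {r | ∃ x : Fin n → ℝ, _root_.enorm x = 1 ∧ r = _root_.enorm (A.mulVec x)}

/-- Smallest singular value. -/
noncomputable def sigmaMin {n : ℕ} (A : Matrix (Fin n) (Fin n) ℝ) : ℝ :=
  sInf {r | ∃ x : Fin n → ℝ, _root_.enorm x = 1 ∧ r = _root_.enorm (A.mulVec x)}

/-- Spectral radius of a real matrix (via its complex spectrum). -/
noncomputable def specRad {n : ℕ} (A : Matrix (Fin n) (Fin n) ℝ) : ENNReal :=
  spectralRadius ℂ (A.map (Complex.ofReal ·))

section Helper

open scoped NNReal ENNReal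
open Filter Topology

attribute [local instance] Matrix.linftyOpNormedRing Matrix.linftyOpNormedAlgebra

variable {n : ℕ}

private lemma nnnorm_map_ofReal (B : Matrix (Fin n) (Fin n) ℝ) :
    ‖B.map (Complex.ofReal ·)‖₊ = ‖B‖₊ := by
  simp [Matrix.linfty_opNNNorm_def, Matrix.map_apply]

private lemma summable_pow_aux {B : Matrix (Fin n) (Fin n) ℝ}
    (h : spectralRadius ℂ (B.map (Complex.ofReal ·)) < 1) :
    Summable fun k : ℕ => B ^ k := by
  set Bc := B.map (Complex.ofReal ·) with hBc
  obtain ⟨r, hr1, hr2⟩ := ENNReal.lt_iff_exists_nnreal_btwn.mp h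
  have hr2' : r < 1 := by exact_mod_cast hr2
  have hg := spectrum.pow_nnnorm_pow_one_div_tendsto_nhds_spectralRadius Bc
  have hev : ∀ᶠ k : ℕ in atTop, (‖Bc ^ k‖₊ : ℝ≥0∞) ^ (1 / (k : ℝ)) < (r : ℝ≥0∞) :=
    hg.eventually_lt_const hr1
  have hev2 : ∀ᶠ k : ℕ in atTop, ‖B ^ k‖ ≤ (r : ℝ) ^ k := by
    filter_upwards [hev, eventually_ge_atTop 1] with k hk hk1
    have hk0 : (k : ℝ) ≠ 0 := Nat.cast_ne_zero.mpr (by omega)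
    have h1 : ((‖Bc ^ k‖₊ : ℝ≥0∞) ^ (1 / (k : ℝ))) ^ (k : ℝ) ≤ (r : ℝ≥0∞) ^ (k : ℝ) :=
      ENNReal.rpow_le_rpow hk.le (by positivity)
    rw [← ENNReal.rpow_mul, one_div_mul_cancel hk0, ENNReal.rpow_one] at h1
    have hBk : Bc ^ k = (B ^ k).map (Complex.ofReal ·) := by
      have hmm : ∀ M : Matrix (Fin n) (Fin n) ℝ,
          M.map (Complex.ofReal ·) = Complex.ofRealHom.mapMatrix M := fun M => rfl
      rw [hBc, hmm, hmm, ← map_pow]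
    have h2 : ‖Bc ^ k‖₊ = ‖B ^ k‖₊ := by rw [hBk, nnnorm_map_ofReal]
    rw [h2, ENNReal.rpow_natCast, ← ENNReal.coe_pow, ENNReal.coe_le_coe] at h1
    exact_mod_cast h1
  obtain ⟨N, hN⟩ := eventually_atTop.mp hev2
  apply Summable.of_norm
  rw [← summable_nat_add_iff N]
  apply Summable.of_nonneg_of_le (fun k => norm_nonneg _) (fun k => hN (k + N) (by omega))
  have : Summable fun k : ℕ => (r : ℝ) ^ (k + N) := by
    simp_rw [pow_add]
    exact (summable_geometric_of_lt_one r.coe_nonneg hr2').mul_right _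
  exact this

private lemma pow_entry_nonneg {B : Matrix (Fin n) (Fin n) ℝ}
    (hB : ∀ i j, 0 ≤ B i j) (k : ℕ) : ∀ i j, 0 ≤ (B ^ k) i j := by
  induction k with
  | zero => intro i j; by_cases hij : i = j <;> simp [Matrix.one_apply, hij]
  | succ k ih =>
    intro i j
    rw [pow_succ, Matrix.mul_apply]
    exact Finset.sum_nonneg fun l _ => mul_nonneg (ih i l) (hB l j)

private lemma key_lemma (B : Matrix (Fin n) (Fin n) ℝ)
    (hB : ∀ i j, 0 ≤ B i j)
    (h : spectralRadius ℂ (B.map (Complex.ofReal ·)) < 1) :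
    IsUnit (1 - B).det ∧ ∀ i j, 0 ≤ (1 - B)⁻¹ i j := by
  have hsum : Summable fun k : ℕ => B ^ k := summable_pow_aux h
  have hlim : Tendsto (fun k : ℕ => B ^ k) atTop (𝓝 0) := hsum.tendsto_atTop_zero
  set S := ∑' k : ℕ, B ^ k with hS
  have hmul : (1 - B) * S = 1 := by
    have h1 : HasSum (fun k : ℕ => (1 - B) * B ^ k) ((1 - B) * S) := hsum.hasSum.mul_left _
    have h2 := h1.tendsto_sum_nat
    have h3 : ∀ N : ℕ, ∑ k ∈ Finset.range N, (1 - B) * B ^ k = 1 - B ^ N := by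
      intro N
      have := Finset.sum_range_sub' (fun k => B ^ k) N
      rw [pow_zero] at this
      rw [← this]
      apply Finset.sum_congr rfl
      intro k _
      rw [sub_mul, one_mul, ← pow_succ']
    simp_rw [h3] at h2
    have h4 : Tendsto (fun N : ℕ => (1 : Matrix (Fin n) (Fin n) ℝ) - B ^ N) atTop (𝓝 (1 - 0)) :=
      tendsto_const_nhds.sub hlim
    rw [sub_zero] at h4
    exact tendsto_nhds_unique h2 h4
  have hdet : IsUnit (1 - B).det := Matrix.isUnit_det_of_right_inverse hmul
  have hinv : (1 - B)⁻¹ = S := Matrix.inv_eq_right_inv hmul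
  refine ⟨hdet, ?_⟩
  intro i j
  rw [hinv]
  -- entry evaluation is a continuous linear map
  let f : Matrix (Fin n) (Fin n) ℝ →ₗ[ℝ] ℝ :=
    { toFun := fun M => M i j
      map_add' := fun _ _ => rfl
      map_smul' := fun _ _ => rfl }
  have hf : Continuous f := f.continuous_of_finiteDimensional
  have hentry : HasSum (fun k : ℕ => (B ^ k) i j) (S i j) :=
    (hsum.hasSum.map f.toAddMonoidHom hf : HasSum (fun k => f (B ^ k)) (f S))
  exact hentry.nonneg fun k => pow_entry_nonneg hB k i j

end Helper

theorem stmt2 {n : ℕ} (A : Matrix (Fin n) (Fin n) ℝ) (b : Fin n → ℝ)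
    (h : specRad (A.map (fun a => |a|)) < 1)
    (i : Fin n) (hi : (-((1 - A.map (fun a => |a|))⁻¹.mulVec b)) i < 0) :
    ¬ ∃ x : Fin n → ℝ, A.mulVec x - absv x = b := by
  set B := A.map (fun a => |a|) with hBdef
  have hB : ∀ i j, 0 ≤ B i j := fun i j => abs_nonneg _
  obtain ⟨hdet, hpos⟩ := key_lemma B hB h
  rintro ⟨x, hx⟩
  set y := absv x with hy'
  have hy : ∀ j, 0 ≤ y j := fun j => abs_nonneg _
  have hineq : ∀ i, ((1 - B).mulVec y) i ≤ -b i := by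
    intro i'
    have hAx : A.mulVec x i' = y i' + b i' := by
      have := congrFun hx i'
      simp only [Pi.sub_apply] at this
      linarith [this]
    have h2 : A.mulVec x i' ≤ B.mulVec y i' := by
      simp only [Matrix.mulVec, dotProduct, hBdef, Matrix.map_apply]
      apply Finset.sum_le_sum
      intro j _
      calc A i' j * x j ≤ |A i' j * x j| := le_abs_self _
        _ = |A i' j| * |x j| := abs_mul _ _
    have h3 : ((1 - B).mulVec y) i' = y i' - B.mulVec y i' := by
      simp [Matrix.sub_mulVec, Matrix.one_mulVec]
    rw [h3]
    linarith
  set C := (1 - B)⁻¹ with hC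
  have hCmul : C * (1 - B) = 1 := Matrix.nonsing_inv_mul _ hdet
  have hyeq : y = C.mulVec ((1 - B).mulVec y) := by
    rw [Matrix.mulVec_mulVec, hCmul, Matrix.one_mulVec]
  have hle : y i ≤ (C.mulVec (fun j => -b j)) i := by
    conv_lhs => rw [hyeq]
    simp only [Matrix.mulVec, dotProduct]
    apply Finset.sum_le_sum
    intro j _
    exact mul_le_mul_of_nonneg_left (hineq j) (hpos i j)
  have hneg : C.mulVec (fun j => -b j) = -(C.mulVec b) := by
    have : (fun j => -b j) = -b := rfl
    rw [this, Matrix.mulVec_neg]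
  rw [hneg] at hle
  have := hy i
  simp only [Pi.neg_apply] at hle hi
  linarith
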